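/- Faithfulness of the translation: Γ ⊢ φ in P[⊥_w] if and only if Γ* ⊢ φ* in P[∨_p]. -/
import Mathlib


/-- Infons of P[∨_p]: atoms, ⊤, ⊥ (an ordinary atom here), conjunction,
primal implication and primal disjunction. -/
inductive Infon : Type
  | atom : ℕ → Infon
  | top : Infon
  | bot : Infon
  | and : Infon → Infon → Infon
  | imp : Infon → Infon → Infon
  | orp : Infon → Infon → Infon
deriving DecidableEq

/-- An infon lies in the language of P[⊥_w], i.e. contains no primal disjunction. -/
def OrFree : Infon → Prop
  | .and φ ψ => OrFree φ ∧ OrFree ψ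
  | .imp φ ψ => OrFree φ ∧ OrFree ψ
  | .orp _ _ => False
  | _ => True

/-- Derivability in the basic primal infon logic P (no rules for ⊥ or ∨_p). -/
inductive DerP : Set Infon → Infon → Prop
  | top (Γ : Set Infon) : DerP Γ .top
  | id (φ : Infon) : DerP {φ} φ
  | weak {Γ φ} (Δ : Set Infon) : DerP Γ φ → DerP (Γ ∪ Δ) φ
  | cut {Γ φ ψ} : DerP Γ φ → DerP (insert φ Γ) ψ → DerP Γ ψ
  | andI {Γ φ ψ} : DerP Γ φ → DerP Γ ψ → DerP Γ (.and φ ψ)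
  | andE1 {Γ φ ψ} : DerP Γ (.and φ ψ) → DerP Γ φ
  | andE2 {Γ φ ψ} : DerP Γ (.and φ ψ) → DerP Γ ψ
  | impI {Γ ψ} (φ : Infon) : DerP Γ ψ → DerP Γ (.imp φ ψ)
  | impE {Γ φ ψ} : DerP Γ φ → DerP Γ (.imp φ ψ) → DerP Γ ψ

/-- Derivability in P[⊥_w]: P plus the weak ⊥-elimination rule. -/
inductive DerW : Set Infon → Infon → Prop
  | top (Γ : Set Infon) : DerW Γ .top
  | id (φ : Infon) : DerW {φ} φ
  | weak {Γ φ} (Δ : Set Infon) : DerW Γ φ → DerW (Γ ∪ Δ) φ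
  | cut {Γ φ ψ} : DerW Γ φ → DerW (insert φ Γ) ψ → DerW Γ ψ
  | andI {Γ φ ψ} : DerW Γ φ → DerW Γ ψ → DerW Γ (.and φ ψ)
  | andE1 {Γ φ ψ} : DerW Γ (.and φ ψ) → DerW Γ φ
  | andE2 {Γ φ ψ} : DerW Γ (.and φ ψ) → DerW Γ ψ
  | impI {Γ ψ} (φ : Infon) : DerW Γ ψ → DerW Γ (.imp φ ψ)
  | impE {Γ φ ψ} : DerW Γ φ → DerW Γ (.imp φ ψ) → DerW Γ ψ
  | botEw {Γ φ ψ} : DerW Γ .bot → DerW Γ (.imp φ ψ) → DerW Γ ψ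

/-- Derivability in P[∨_p]: P plus the two introduction rules for primal disjunction
(and no elimination rule; ⊥ is an ordinary atom). -/
inductive DerO : Set Infon → Infon → Prop
  | top (Γ : Set Infon) : DerO Γ .top
  | id (φ : Infon) : DerO {φ} φ
  | weak {Γ φ} (Δ : Set Infon) : DerO Γ φ → DerO (Γ ∪ Δ) φ
  | cut {Γ φ ψ} : DerO Γ φ → DerO (insert φ Γ) ψ → DerO Γ ψ
  | andI {Γ φ ψ} : DerO Γ φ → DerO Γ ψ → DerO Γ (.and φ ψ)
  | andE1 {Γ φ ψ} : DerO Γ (.and φ ψ) → DerO Γ φ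
  | andE2 {Γ φ ψ} : DerO Γ (.and φ ψ) → DerO Γ ψ
  | impI {Γ ψ} (φ : Infon) : DerO Γ ψ → DerO Γ (.imp φ ψ)
  | impE {Γ φ ψ} : DerO Γ φ → DerO Γ (.imp φ ψ) → DerO Γ ψ
  | orI1 {Γ φ₁} (φ₂ : Infon) : DerO Γ φ₁ → DerO Γ (.orp φ₁ φ₂)
  | orI2 {Γ φ₂} (φ₁ : Infon) : DerO Γ φ₂ → DerO Γ (.orp φ₁ φ₂)

/-- The translation (·)*: primal implication φ→ψ goes to (⊥ ∨_p φ*) → ψ*,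
all other connectives are translated homomorphically. -/
def star : Infon → Infon
  | .and φ ψ => .and (star φ) (star ψ)
  | .imp φ ψ => .imp (.orp .bot (star φ)) (star ψ)
  | .orp φ ψ => .orp (star φ) (star ψ)
  | φ => φ

/-- Membership implies derivability in P[⊥_w]. -/
lemma derW_mem {Γ : Set Infon} {ψ : Infon} (h : ψ ∈ Γ) : DerW Γ ψ := by
  have := DerW.weak (Γ := {ψ}) Γ (DerW.id ψ)
  rwa [Set.singleton_union, Set.insert_eq_self.mpr h] at this

/-- Forward direction: translate a P[⊥_w] derivation into P[∨_p]. -/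
lemma derW_to_derO {Γ : Set Infon} {φ : Infon} (h : DerW Γ φ) :
    DerO (star '' Γ) (star φ) := by
  induction h with
  | top Γ => exact DerO.top _
  | id φ => rw [Set.image_singleton]; exact DerO.id _
  | weak Δ _ ih => rw [Set.image_union]; exact DerO.weak _ ih
  | cut _ _ ih1 ih2 =>
      refine DerO.cut ih1 ?_
      rwa [← Set.image_insert_eq]
  | andI _ _ ih1 ih2 => exact DerO.andI ih1 ih2
  | andE1 _ ih => exact DerO.andE1 ih
  | andE2 _ ih => exact DerO.andE2 ih
  | impI φ _ ih => exact DerO.impI _ ih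
  | impE _ _ ih1 ih2 => exact DerO.impE (DerO.orI2 _ ih1) ih2
  | botEw _ _ ih1 ih2 => exact DerO.impE (DerO.orI1 _ ih1) ih2

/-- Partial inverse of the translation `star`. -/
def unstar : Infon → Option Infon
  | .atom n => some (.atom n)
  | .top => some .top
  | .bot => some .bot
  | .and α β =>
      match unstar α, unstar β with
      | some a, some b => some (.and a b)
      | _, _ => none
  | .imp (.orp .bot α) β =>
      match unstar α, unstar β with
      | some a, some b => some (.imp a b)
      | _, _ => none
  | _ => none

lemma unstar_star : ∀ φ : Infon, OrFree φ → unstar (_root_.star φ) = some φ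
  | .atom _, _ => rfl
  | .top, _ => rfl
  | .bot, _ => rfl
  | .and φ ψ, h => by
      show (match unstar (_root_.star φ), unstar (_root_.star ψ) with
        | some a, some b => some (Infon.and a b)
        | _, _ => none) = some (Infon.and φ ψ)
      rw [unstar_star φ h.1, unstar_star ψ h.2]
  | .imp φ ψ, h => by
      show (match unstar (_root_.star φ), unstar (_root_.star ψ) with
        | some a, some b => some (Infon.imp a b)
        | _, _ => none) = some (Infon.imp φ ψ)
      rw [unstar_star φ h.1, unstar_star ψ h.2]

/-- Shape of an implication in the image of `unstar`. -/
lemma unstar_imp_eq {α β χ : Infon} (h : unstar (.imp α β) = some χ) :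
    ∃ α' a b, α = .orp .bot α' ∧ unstar α' = some a ∧ unstar β = some b ∧
      χ = .imp a b := by
  match α, h with
  | .orp .bot α', h =>
      refine ⟨α', ?_⟩
      have h' : (match unstar α', unstar β with
          | some a, some b => some (Infon.imp a b)
          | _, _ => none) = some χ := h
      rcases hα : unstar α' with _ | a <;> rcases hβ : unstar β with _ | b <;>
        rw [hα, hβ] at h' <;> cases h'
      exact ⟨a, b, rfl, rfl, rfl, rfl⟩

/-- Semantic interpretation of P[∨_p]-infons relative to a P[⊥_w] context Γ. -/
def v (Γ : Set Infon) : Infon → Prop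
  | .atom n => DerW Γ (.atom n)
  | .top => True
  | .bot => DerW Γ .bot
  | .and α β => v Γ α ∧ v Γ β
  | .orp α β => v Γ α ∨ v Γ β
  | .imp α β => (unstar (.imp α β)).elim (v Γ α → v Γ β) (fun ψ => DerW Γ ψ)

/-- On the image of `unstar`, the interpretation coincides with derivability. -/
lemma v_unstar {Γ : Set Infon} :
    ∀ χ ψ : Infon, unstar χ = some ψ → (v Γ χ ↔ DerW Γ ψ)
  | .atom n, ψ, h => by
      simp only [unstar, Option.some.injEq] at h; subst h; rfl
  | .top, ψ, h => by
      simp only [unstar, Option.some.injEq] at h; subst h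
      simpa [v] using DerW.top Γ
  | .bot, ψ, h => by
      simp only [unstar, Option.some.injEq] at h; subst h; rfl
  | .and α β, ψ, h => by
      have h' : (match unstar α, unstar β with
          | some a, some b => some (Infon.and a b)
          | _, _ => none) = some ψ := h
      rcases hα : unstar α with _ | a <;> rcases hβ : unstar β with _ | b <;>
        rw [hα, hβ] at h' <;> cases h'
      rw [show v Γ (.and α β) = (v Γ α ∧ v Γ β) from rfl,
        v_unstar α a hα, v_unstar β b hβ]
      exact ⟨fun ⟨h1, h2⟩ => DerW.andI h1 h2,
        fun h => ⟨DerW.andE1 h, DerW.andE2 h⟩⟩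
  | .imp α β, ψ, h => by
      rw [show v Γ (.imp α β) =
        (unstar (.imp α β)).elim (v Γ α → v Γ β) (fun ψ => DerW Γ ψ) from rfl,
        h]
      rfl
  | .orp α β, ψ, h => by simp [unstar] at h

/-- Soundness of P[∨_p] with respect to the interpretation `v Γ`. -/
lemma derO_sound {Δ : Set Infon} {χ : Infon} (h : DerO Δ χ) (Γ : Set Infon)
    (hΔ : ∀ δ ∈ Δ, v Γ δ) : v Γ χ := by
  induction h with
  | top Δ => trivial
  | id φ => exact hΔ φ rfl
  | weak Δ' _ ih => exact ih (fun δ hδ => hΔ δ (Set.mem_union_left _ hδ))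
  | cut _ _ ih1 ih2 =>
      refine ih2 (fun δ hδ => ?_)
      rcases hδ with rfl | hδ
      · exact ih1 hΔ
      · exact hΔ δ hδ
  | andI _ _ ih1 ih2 => exact ⟨ih1 hΔ, ih2 hΔ⟩
  | andE1 _ ih => exact (ih hΔ).1
  | andE2 _ ih => exact (ih hΔ).2
  | @impI Δ' ψ φ _ ih =>
      show (unstar (.imp φ ψ)).elim (v Γ φ → v Γ ψ) (fun χ => DerW Γ χ)
      rcases hu : unstar (.imp φ ψ) with _ | χ
      · exact fun _ => ih hΔ
      · obtain ⟨α', a, b, rfl, ha, hb, rfl⟩ := unstar_imp_eq hu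
        exact DerW.impI _ ((v_unstar ψ b hb).mp (ih hΔ))
  | @impE Δ' φ ψ _ _ ih1 ih2 =>
      have h2 : (unstar (.imp φ ψ)).elim (v Γ φ → v Γ ψ) (fun χ => DerW Γ χ) :=
        ih2 hΔ
      have h1 := ih1 hΔ
      rcases hu : unstar (.imp φ ψ) with _ | χ
      · rw [hu] at h2; exact h2 h1
      · obtain ⟨α', a, b, rfl, ha, hb, rfl⟩ := unstar_imp_eq hu
        rw [hu] at h2
        refine (v_unstar ψ b hb).mpr ?_
        rcases h1 with h1 | h1
        · exact DerW.botEw h1 h2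
        · exact DerW.impE ((v_unstar α' a ha).mp h1) h2
  | orI1 φ₂ _ ih => exact Or.inl (ih hΔ)
  | orI2 φ₁ _ ih => exact Or.inr (ih hΔ)

/-- Faithfulness of the translation: Γ ⊢ φ in P[⊥_w] iff Γ* ⊢ φ* in P[∨_p]
(for Γ, φ in the ∨-free language of P[⊥_w]). -/
theorem star_faithful (Γ : Set Infon) (φ : Infon)
    (hΓ : ∀ ψ ∈ Γ, OrFree ψ) (hφ : OrFree φ) :
    DerW Γ φ ↔ DerO (star '' Γ) (star φ) := by
  constructor
  · exact derW_to_derO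
  · intro h
    have hv : v Γ (star φ) := by
      refine derO_sound h Γ ?_
      rintro _ ⟨ψ, hψ, rfl⟩
      exact (v_unstar (star ψ) ψ (unstar_star ψ (hΓ ψ hψ))).mpr (derW_mem hψ)
    exact (v_unstar (star φ) φ (unstar_star φ hφ)).mp hv
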